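/- Let $X \subseteq \mathbb{R}^n$ be closed and convex, $\omega$ differentiable and $\mu_\omega$-strongly convex on $X$ with Bregman distance $D$ and prox mapping $P(x,y) = \arg\min_{z \in X}\{\langle y, z\rangle + D(x,z)\}$. Then for any $x, z \in X$ and $y \in \mathbb{R}^n$: $D(P(x,y), z) \le D(x,z) + \langle y, z - x\rangle + \frac{\|y\|_*^2}{2\mu_\omega}$, where $\|\cdot\|_*$ is the dual norm. -/

import Mathlib

open scoped InnerProductSpace

private lemma deriv_nonneg_of_min {g : ℝ → ℝ} {g' : ℝ}
    (hd : HasDerivAt g g' 0) (hmin : ∀ t ∈ Set.Ioc (0:ℝ) 1, g 0 ≤ g t) : 0 ≤ g' := by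
  have h := hasDerivAt_iff_tendsto_slope.mp hd
  have h2 : Filter.Tendsto (slope g 0) (nhdsWithin 0 (Set.Ioi 0)) (nhds g') :=
    h.mono_left (nhdsWithin_mono 0 (fun t ht => ne_of_gt ht))
  refine ge_of_tendsto h2 ?_
  filter_upwards [Ioc_mem_nhdsGT_of_mem (by norm_num : (0:ℝ) ∈ Set.Ico 0 1)] with t ht
  have h0 : 0 < t := ht.1
  have : g 0 ≤ g t := hmin t ht
  simp only [slope_def_field]
  rw [div_eq_mul_inv]
  have : 0 ≤ g t - g 0 := by linarith
  rw [sub_zero]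
  positivity

theorem stmt_10 {n : ℕ} (X : Set (EuclideanSpace ℝ (Fin n)))
    (hXne : X.Nonempty) (hXclosed : IsClosed X) (hXconv : Convex ℝ X)
    (ω : EuclideanSpace ℝ (Fin n) → ℝ) (μω : ℝ) (hμ : 0 < μω)
    (hdiff : Differentiable ℝ ω)
    (hsc : ∀ a ∈ X, ∀ b ∈ X,
      ω a + ⟪gradient ω a, b - a⟫_ℝ + μω / 2 * ‖a - b‖ ^ 2 ≤ ω b)
    (D : EuclideanSpace ℝ (Fin n) → EuclideanSpace ℝ (Fin n) → ℝ)
    (hD : ∀ a b, D a b = ω b - ω a - ⟪gradient ω a, b - a⟫_ℝ)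
    (dualNorm : EuclideanSpace ℝ (Fin n) → ℝ)
    (hdual : ∀ v, dualNorm v = sSup {t : ℝ | ∃ u : EuclideanSpace ℝ (Fin n), ‖u‖ ≤ 1 ∧ t = ⟪u, v⟫_ℝ})
    (x : EuclideanSpace ℝ (Fin n)) (hx : x ∈ X)
    (y : EuclideanSpace ℝ (Fin n))
    (p : EuclideanSpace ℝ (Fin n)) (hp : p ∈ X)
    (hmin : IsMinOn (fun z => ⟪y, z⟫_ℝ + D x z) X p) :
    ∀ z ∈ X, D p z ≤ D x z + ⟪y, z - x⟫_ℝ + dualNorm y ^ 2 / (2 * μω) := by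
  -- dual norm equals the norm
  have hdn : dualNorm y = ‖y‖ := by
    rw [hdual]
    set S := {t : ℝ | ∃ u : EuclideanSpace ℝ (Fin n), ‖u‖ ≤ 1 ∧ t = ⟪u, y⟫_ℝ}
    have hbdd : ∀ t ∈ S, t ≤ ‖y‖ := by
      rintro t ⟨u, hu, rfl⟩
      calc ⟪u, y⟫_ℝ ≤ ‖u‖ * ‖y‖ := real_inner_le_norm u y
        _ ≤ 1 * ‖y‖ := mul_le_mul_of_nonneg_right hu (norm_nonneg y)
        _ = ‖y‖ := one_mul _
    rcases eq_or_ne y 0 with rfl | hy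
    · have : S = {0} := by
        apply Set.eq_singleton_iff_unique_mem.mpr
        refine ⟨⟨0, by simp⟩, ?_⟩
        rintro t ⟨u, hu, rfl⟩; simp
      rw [this]; simp
    · refine le_antisymm (csSup_le ⟨0, ⟨0, by simp⟩⟩ hbdd) ?_
      have hmem : ‖y‖ ∈ S := by
        refine ⟨‖y‖⁻¹ • y, ?_, ?_⟩
        · rw [norm_smul]
          simp [abs_of_nonneg (inv_nonneg.mpr (norm_nonneg y)),
            inv_mul_cancel₀ (norm_ne_zero_iff.mpr hy)]
        · rw [real_inner_smul_left, real_inner_self_eq_norm_sq]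
          field_simp [norm_ne_zero_iff.mpr hy]
      exact le_csSup ⟨‖y‖, hbdd⟩ hmem
  intro z hz
  -- variational inequality
  set gx := gradient ω x with hgx
  set gp := gradient ω p with hgp
  have hvar : 0 ≤ ⟪y, z - p⟫_ℝ + ⟪gp, z - p⟫_ℝ - ⟪gx, z - p⟫_ℝ := by
    set g : ℝ → ℝ := fun t => ⟪y, p + t • (z - p)⟫_ℝ + D x (p + t • (z - p)) with hg
    have hgt : ∀ t : ℝ, g t = ω (p + t • (z - p)) +
        (⟪y, p⟫_ℝ + t * ⟪y, z - p⟫_ℝ) - ω x -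
        (⟪gx, p - x⟫_ℝ + t * ⟪gx, z - p⟫_ℝ) := by
      intro t
      simp only [hg, hD]
      have h1 : ⟪y, p + t • (z - p)⟫_ℝ = ⟪y, p⟫_ℝ + t * ⟪y, z - p⟫_ℝ := by
        rw [inner_add_right, real_inner_smul_right]
      have h2 : ⟪gx, p + t • (z - p) - x⟫_ℝ = ⟪gx, p - x⟫_ℝ + t * ⟪gx, z - p⟫_ℝ := by
        rw [show p + t • (z - p) - x = (p - x) + t • (z - p) by abel,
          inner_add_right, real_inner_smul_right]
      rw [h1, h2]; ring
    -- derivative of g at 0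
    have hc : HasDerivAt (fun t : ℝ => p + t • (z - p)) (z - p) 0 := by
      have : HasDerivAt (fun t : ℝ => t • (z - p)) ((1:ℝ) • (z - p)) 0 :=
        (hasDerivAt_id 0).smul_const (z - p)
      simpa using this.const_add p
    have hω : HasDerivAt (fun t : ℝ => ω (p + t • (z - p))) ⟪gp, z - p⟫_ℝ 0 := by
      have hgrad : HasGradientAt ω gp p := (hdiff p).hasGradientAt
      have hgrad2 : HasFDerivAt ω ((InnerProductSpace.toDual ℝ (EuclideanSpace ℝ (Fin n))) gp)
          (p + (0:ℝ) • (z - p)) := by simpa using hgrad.hasFDerivAt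
      have := hgrad2.comp_hasDerivAt 0 hc
      simp at this; exact this
    have hderiv : HasDerivAt g (⟪y, z - p⟫_ℝ + ⟪gp, z - p⟫_ℝ - ⟪gx, z - p⟫_ℝ) 0 := by
      have : HasDerivAt (fun t : ℝ => ω (p + t • (z - p)) +
          (⟪y, p⟫_ℝ + t * ⟪y, z - p⟫_ℝ) - ω x -
          (⟪gx, p - x⟫_ℝ + t * ⟪gx, z - p⟫_ℝ))
          (⟪gp, z - p⟫_ℝ + (0 + 1 * ⟪y, z - p⟫_ℝ) - 0 - (0 + 1 * ⟪gx, z - p⟫_ℝ)) 0 := by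
        apply HasDerivAt.sub
        apply HasDerivAt.sub
        apply HasDerivAt.add hω
        · exact (hasDerivAt_const _ _).add ((hasDerivAt_id 0).mul_const _)
        · exact hasDerivAt_const _ _
        · exact (hasDerivAt_const _ _).add ((hasDerivAt_id 0).mul_const _)
      have heq : g = fun t : ℝ => ω (p + t • (z - p)) +
          (⟪y, p⟫_ℝ + t * ⟪y, z - p⟫_ℝ) - ω x -
          (⟪gx, p - x⟫_ℝ + t * ⟪gx, z - p⟫_ℝ) := funext hgt
      rw [heq]
      convert this using 1
      ring
    apply deriv_nonneg_of_min hderiv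
    intro t ht
    have hmem : p + t • (z - p) ∈ X := by
      have := hXconv hp hz (by linarith [ht.2] : (0:ℝ) ≤ 1 - t) (le_of_lt ht.1)
        (by ring : (1 - t) + t = 1)
      convert this using 1
      module
    have h0 : g 0 = ⟪y, p⟫_ℝ + D x p := by simp [hg]
    have := hmin hmem
    simpa [hg, h0] using this
  -- strong convexity lower bound on D x p
  have hDxp : μω / 2 * ‖x - p‖ ^ 2 ≤ D x p := by
    have := hsc x hx p hp
    rw [hD]; linarith
  -- young-type inequality
  have hyoung : ⟪y, x - p⟫_ℝ ≤ ‖y‖ ^ 2 / (2 * μω) + μω / 2 * ‖x - p‖ ^ 2 := by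
    have h1 : ⟪y, x - p⟫_ℝ ≤ ‖y‖ * ‖x - p‖ := real_inner_le_norm y (x - p)
    have h2μ : (0:ℝ) < 2 * μω := by linarith
    have key : ⟪y, x - p⟫_ℝ * (2 * μω) ≤ ‖y‖ ^ 2 + μω ^ 2 * ‖x - p‖ ^ 2 := by
      nlinarith [sq_nonneg (‖y‖ - μω * ‖x - p‖),
        mul_le_mul_of_nonneg_right h1 (le_of_lt h2μ)]
    calc ⟪y, x - p⟫_ℝ = ⟪y, x - p⟫_ℝ * (2 * μω) / (2 * μω) := by field_simp
      _ ≤ (‖y‖ ^ 2 + μω ^ 2 * ‖x - p‖ ^ 2) / (2 * μω) := by gcongr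
      _ = ‖y‖ ^ 2 / (2 * μω) + μω / 2 * ‖x - p‖ ^ 2 := by field_simp
  -- three point identity pieces
  have hsplit : ⟪y, z - p⟫_ℝ = ⟪y, z - x⟫_ℝ + ⟪y, x - p⟫_ℝ := by
    rw [← inner_add_right]
    congr 1
    abel
  have h3 : D p z = D x z - D x p - (⟪gp, z - p⟫_ℝ - ⟪gx, z - p⟫_ℝ) := by
    simp only [hD, ← hgx, ← hgp]
    have e1 : ⟪gx, z - x⟫_ℝ = ⟪gx, z - p⟫_ℝ + ⟪gx, p - x⟫_ℝ := by
      rw [← inner_add_right]; congr 1; abel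
    rw [e1]; ring
  rw [hdn, h3]
  have : -(⟪gp, z - p⟫_ℝ - ⟪gx, z - p⟫_ℝ) ≤ ⟪y, z - p⟫_ℝ := by linarith
  rw [hsplit] at this
  linarith
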